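/- Let $\sigma > 0$ and let $Z$ be a standard Gaussian. Then $\mathbb{E}[\operatorname{sech}^2(\sigma^2 + \sigma Z)] \leq \frac{1}{1 + \sigma^2}$. -/

import Mathlib

open MeasureTheory ProbabilityTheory Real
open scoped ENNReal NNReal

noncomputable def phi (z : ℝ) : ℝ := gaussianPDFReal 0 1 z

lemma phi_eq (z : ℝ) : phi z = (Real.sqrt (2*Real.pi))⁻¹ * Real.exp (-(2⁻¹*z^2)) := by
  simp [phi, gaussianPDFReal]; ring_nf; tauto

lemma phi_even (z : ℝ) : phi (-z) = phi z := by rw [phi_eq, phi_eq]; ring_nf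

lemma phi_nonneg (z : ℝ) : 0 ≤ phi z := gaussianPDFReal_nonneg 0 1 z
lemma phi_cont : Continuous phi := by simp only [funext phi_eq]; fun_prop
lemma integrable_phi : Integrable phi := integrable_gaussianPDFReal 0 1
lemma J0 : ∫ z, phi z = 1 := integral_gaussianPDFReal_eq_one 0 one_ne_zero

lemma gauss_int (g : ℝ → ℝ) :
    ∫ z, g z ∂(gaussianReal 0 1) = ∫ z, g z * phi z := by
  rw [gaussianReal_of_var_ne_zero _ one_ne_zero]
  have h1 : (gaussianPDF 0 1) = fun x => ((gaussianPDFReal 0 1 x).toNNReal : ℝ≥0∞) := rfl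
  rw [h1, integral_withDensity_eq_integral_smul
    ((measurable_gaussianPDFReal 0 1).real_toNNReal) g]
  congr 1
  ext x
  simp [NNReal.smul_def, Real.coe_toNNReal _ (gaussianPDFReal_nonneg 0 1 x), mul_comm, phi]

lemma gauss_bound (z : ℝ) :
    (1 + z^2) * Real.exp (-(2⁻¹*z^2)) ≤ 5 * Real.exp (-(4⁻¹*z^2)) := by
  have h1 : Real.exp (-(2⁻¹*z^2)) = Real.exp (-(4⁻¹*z^2)) * Real.exp (-(4⁻¹*z^2)) := by
    rw [← Real.exp_add]; ring_nf
  have h2 : 1 + 4⁻¹*z^2 ≤ Real.exp (4⁻¹*z^2) := by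
    have := Real.add_one_le_exp (4⁻¹*z^2); linarith
  have h3 : Real.exp (-(4⁻¹*z^2)) * Real.exp (4⁻¹*z^2) = 1 := by
    rw [← Real.exp_add]; simp
  have h4 : Real.exp (-(4⁻¹*z^2)) ≤ 1 := by
    rw [Real.exp_le_one_iff]; nlinarith [sq_nonneg z]
  have h5 : (0:ℝ) < Real.exp (-(4⁻¹*z^2)) := Real.exp_pos _
  have h6 : (1 + z^2) * Real.exp (-(4⁻¹*z^2)) ≤ 5 := by
    nlinarith [Real.exp_pos (4⁻¹*z^2)]
  calc (1 + z^2) * Real.exp (-(2⁻¹*z^2))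
      = ((1 + z^2) * Real.exp (-(4⁻¹*z^2))) * Real.exp (-(4⁻¹*z^2)) := by rw [h1]; ring
    _ ≤ 5 * Real.exp (-(4⁻¹*z^2)) := by nlinarith

lemma integrable_helper {g : ℝ → ℝ} (hg : Continuous g) {C : ℝ}
    (hC : ∀ z, |g z| ≤ C * (1 + z^2)) : Integrable (fun z => g z * phi z) := by
  have hC0 : 0 ≤ C := by nlinarith [hC 0, abs_nonneg (g 0)]
  have hint : Integrable (fun z : ℝ => C * (Real.sqrt (2*Real.pi))⁻¹ * (5 * Real.exp (-(4⁻¹*z^2)))) := by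
    have : Integrable (fun z : ℝ => Real.exp (-(4⁻¹ * z^2))) := by
      have := integrable_exp_neg_mul_sq (b := (4:ℝ)⁻¹) (by norm_num)
      simpa [neg_mul] using this
    exact (this.const_mul 5).const_mul _
  refine Integrable.mono' hint ((hg.mul phi_cont).aestronglyMeasurable) ?_
  filter_upwards with z
  have h0 : 0 ≤ (Real.sqrt (2*Real.pi))⁻¹ := by positivity
  rw [Real.norm_eq_abs, abs_mul, abs_of_nonneg (phi_nonneg z), phi_eq]
  calc |g z| * ((Real.sqrt (2*Real.pi))⁻¹ * Real.exp (-(2⁻¹*z^2)))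
      ≤ (C * (1+z^2)) * ((Real.sqrt (2*Real.pi))⁻¹ * Real.exp (-(2⁻¹*z^2))) := by
        apply mul_le_mul_of_nonneg_right (hC z); positivity
    _ = C * (Real.sqrt (2*Real.pi))⁻¹ * ((1+z^2) * Real.exp (-(2⁻¹*z^2))) := by ring
    _ ≤ C * (Real.sqrt (2*Real.pi))⁻¹ * (5 * Real.exp (-(4⁻¹*z^2))) := by
        apply mul_le_mul_of_nonneg_left (gauss_bound z); positivity

lemma tilt (c : ℝ) (f : ℝ → ℝ) :
    ∫ z, f z * phi (z + c) = ∫ z, f (-z - c) * phi z := by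
  have h1 := MeasureTheory.integral_add_right_eq_self
    (μ := volume) (fun z => f (z - c) * phi z) c
  have h2 := MeasureTheory.integral_neg_eq_self
    (μ := volume) (fun z => f (z - c) * phi z)
  calc ∫ z, f z * phi (z + c) = ∫ z, f (z + c - c) * phi (z + c) := by simp
    _ = ∫ z, f (z - c) * phi z := h1
    _ = ∫ z, f (-z - c) * phi z := by
        rw [← h2]; congr 1; ext z; rw [phi_even]

lemma integrable_comp_add {f : ℝ → ℝ} (hf : Integrable f) (c : ℝ) :
    Integrable (fun z => f (z + c)) := by
  have h1 : MeasurePreserving (fun z : ℝ => z + c) volume volume :=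
    measurePreserving_add_right (volume : Measure ℝ) c
  exact (h1.integrable_comp hf.aestronglyMeasurable).mpr hf

lemma key_scalar (a : ℝ) :
    Real.tanh a * (1 + Real.exp (-(2*a))) = 1 - Real.exp (-(2*a)) := by
  rw [Real.tanh_eq_sinh_div_cosh, Real.sinh_eq, Real.cosh_eq]
  have h1 : (0:ℝ) < Real.exp a + Real.exp (-a) := by positivity
  have h2 : Real.exp (-(2*a)) = Real.exp (-a) * Real.exp (-a) := by
    rw [← Real.exp_add]; ring_nf
  have h3 : Real.exp (-a) * Real.exp a = 1 := by rw [← Real.exp_add]; simp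
  field_simp
  rw [show -(a*2) = -(2*a) by ring, h2]
  linear_combination (2 * Real.exp (-a)) * h3

lemma abs_tanh_le_one (x : ℝ) : |Real.tanh x| ≤ 1 := by
  rw [Real.tanh_eq_sinh_div_cosh, abs_div, abs_of_pos (Real.cosh_pos x),
    div_le_one (Real.cosh_pos x)]
  nlinarith [Real.cosh_sq x, Real.cosh_pos x, sq_abs (Real.sinh x),
    abs_nonneg (Real.sinh x)]

lemma hasDerivAt_phi (z : ℝ) : HasDerivAt phi (-(z * phi z)) z := by
  have h1 : HasDerivAt (fun z : ℝ => -(2⁻¹*z^2)) (-z) z := by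
    have := ((hasDerivAt_pow 2 z).const_mul (2:ℝ)⁻¹).neg
    exact this.congr_deriv (by ring)
  have h2 := (h1.exp).const_mul ((Real.sqrt (2*Real.pi))⁻¹)
  have h3 : HasDerivAt (fun z : ℝ => (Real.sqrt (2*Real.pi))⁻¹ * Real.exp (-(2⁻¹*z^2)))
      (-(z * phi z)) z := by
    exact h2.congr_deriv (by rw [phi_eq]; ring)
  exact (funext phi_eq : phi = _) ▸ h3

lemma J1 : ∫ z, z * phi z = 0 := by
  have h := MeasureTheory.integral_neg_eq_self (μ := volume) (fun z => z * phi z)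
  have h2 : (∫ z, (fun z => z * phi z) (-z)) = - ∫ z, z * phi z := by
    rw [show (fun z : ℝ => (fun z => z * phi z) (-z)) = fun z => -(z * phi z) by
      ext z; simp [phi_even]]
    exact integral_neg _
  rw [h2] at h
  linarith

lemma J2 : ∫ z, z^2 * phi z = 1 := by
  have hu : ∀ x : ℝ, HasDerivAt (fun y : ℝ => y) ((fun _ : ℝ => (1:ℝ)) x) x :=
    fun x => hasDerivAt_id x
  have hv : ∀ x : ℝ, HasDerivAt (fun y : ℝ => -phi y) ((fun y : ℝ => y * phi y) x) x := by
    intro x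
    have := (hasDerivAt_phi x).neg; rw [neg_neg] at this; exact this
  have huv' : Integrable ((fun y : ℝ => y) * (fun y : ℝ => y * phi y)) := by
    have : Integrable (fun z : ℝ => z^2 * phi z) :=
      integrable_helper (by fun_prop) (C := 1) (fun z => by
        rw [abs_of_nonneg (by positivity)]; nlinarith [sq_nonneg z])
    refine this.congr (by filter_upwards with z; simp [Pi.mul_apply]; ring)
  have hu'v : Integrable ((fun _ : ℝ => (1:ℝ)) * (fun y : ℝ => -phi y)) := by
    refine (integrable_phi.neg).congr (by filter_upwards with z; simp)
  have huv : Integrable ((fun y : ℝ => y) * (fun y : ℝ => -phi y)) := by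
    have h : Integrable (fun z : ℝ => -z * phi z) :=
      integrable_helper (by fun_prop) (C := 1) (fun z => by
        rw [abs_neg, one_mul]
        nlinarith [sq_nonneg (|z| - 1), sq_abs z, abs_nonneg z])
    refine h.congr (by filter_upwards with z; simp [Pi.mul_apply])
  have h := MeasureTheory.integral_mul_deriv_eq_deriv_mul_of_integrable (fun x _ => hu x) (fun x _ => hv x) huv' hu'v huv
  have h1 : (∫ x : ℝ, x * (x * phi x)) = ∫ z, z^2 * phi z := by
    congr 1; ext z; ring
  have h2 : (∫ x : ℝ, (1:ℝ) * -phi x) = -1 := by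
    rw [show (fun x : ℝ => (1:ℝ) * -phi x) = fun x => -phi x by ext x; ring]
    rw [integral_neg, J0]
  rw [h1, h2] at h
  linarith [h]

theorem stmt_7 (σ : ℝ) (hσ : 0 < σ) :
    ∫ z, ((Real.cosh (σ ^ 2 + σ * z))⁻¹) ^ 2 ∂(gaussianReal 0 1) ≤ 1 / (1 + σ ^ 2) := by
  -- notation
  set A : ℝ → ℝ := fun z => Real.tanh (σ^2 + σ*z) with hA
  -- tilted density
  have hpsi : ∀ z, phi (z + 2*σ) = Real.exp (-(2*(σ^2+σ*z))) * phi z := by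
    intro z
    rw [phi_eq, phi_eq, ← mul_assoc, mul_comm (Real.exp _) _, mul_assoc, ← Real.exp_add]
    congr 2
    ring
  -- key pointwise identity
  have keyT : ∀ z, A z * (phi z + phi (z + 2*σ)) = phi z - phi (z + 2*σ) := by
    intro z
    rw [hpsi z]
    have h := key_scalar (σ^2 + σ*z)
    simp only [hA]
    linear_combination phi z * h
  -- negation of the argument
  have hneg : ∀ z : ℝ, σ^2 + σ*(-z - 2*σ) = -(σ^2 + σ*z) := by intro z; ring
  have hAneg : ∀ z : ℝ, A (-z - 2*σ) = -A z := by
    intro z; simp only [hA]; rw [hneg z, Real.tanh_neg]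
  -- integrability facts
  have iAbd : ∀ z, |A z| ≤ 1 := fun z => abs_tanh_le_one _
  have hAcont : Continuous A := by
    rw [show A = fun z => Real.sinh (σ^2+σ*z) / Real.cosh (σ^2+σ*z) from
      funext fun z => Real.tanh_eq_sinh_div_cosh _]
    exact (Real.continuous_sinh.comp (by fun_prop)).div
      (Real.continuous_cosh.comp (by fun_prop)) (fun z => (Real.cosh_pos _).ne')
  have iA2phi : Integrable (fun z => A z^2 * phi z) := by
    refine integrable_helper (hAcont.pow 2) (C := 1) (fun z => ?_)
    rw [one_mul, abs_of_nonneg (sq_nonneg _)]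
    nlinarith [sq_nonneg z, sq_abs (A z), abs_nonneg (A z), iAbd z]
  have isAphi : Integrable (fun z => (σ+z) * A z * phi z) := by
    refine integrable_helper (((continuous_const.add continuous_id).mul hAcont)) (C := σ + 1) (fun z => ?_)
    have h1 := iAbd z
    have h2 : |(σ+z) * A z| ≤ |σ + z| := by
      rw [abs_mul]
      nlinarith [abs_nonneg (σ+z)]
    have h3 : |σ + z| ≤ (σ+1) * (1 + z^2) := by
      have := abs_add_le σ z
      have h4 : |σ| = σ := abs_of_pos hσ
      nlinarith [sq_nonneg (|z| - 1), sq_abs z, abs_nonneg z]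
    linarith
  have isphi : Integrable (fun z => (σ+z) * phi z) := by
    refine integrable_helper (by fun_prop) (C := σ + 1) (fun z => ?_)
    have := abs_add_le σ z
    have h4 : |σ| = σ := abs_of_pos hσ
    nlinarith [sq_nonneg (|z| - 1), sq_abs z, abs_nonneg z]
  have is2phi : Integrable (fun z => (σ+z)^2 * phi z) := by
    refine integrable_helper (by fun_prop) (C := 2*σ^2 + 2) (fun z => ?_)
    rw [abs_of_nonneg (sq_nonneg _)]
    nlinarith [sq_nonneg (σ - z), sq_nonneg z, sq_nonneg σ]
  have ispsi : Integrable (fun z => (σ+z) * phi (z + 2*σ)) := by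
    have h : Integrable (fun w => (w - σ) * phi w) := by
      refine integrable_helper (by fun_prop) (C := σ + 1) (fun w => ?_)
      have := abs_sub_abs_le_abs_sub w σ
      have h4 : |σ| = σ := abs_of_pos hσ
      have := abs_sub (w) (σ)
      have h5 : |w - σ| ≤ |w| + σ := by
        calc |w - σ| ≤ |w| + |σ| := abs_sub _ _
        _ = |w| + σ := by rw [h4]
      nlinarith [sq_nonneg (|w| - 1), sq_abs w, abs_nonneg w]
    have h2 := integrable_comp_add h (2*σ)
    refine h2.congr (by filter_upwards with z; congr 1; ring)
  have isApsi : Integrable (fun z => (σ+z) * A z * phi (z + 2*σ)) := by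
    have h := Integrable.bdd_mul ispsi hAcont.aestronglyMeasurable
      (c := 1) (Filter.Eventually.of_forall fun z => by rw [Real.norm_eq_abs]; exact iAbd z)
    refine h.congr (by filter_upwards with z; ring)
  -- the integral of (σ+z) against phi is σ
  have hJσ : ∫ z, (σ+z) * phi z = σ := by
    have e : (fun z => (σ+z) * phi z) = fun z => σ * phi z + z * phi z := by ext z; ring
    rw [e, integral_add (integrable_phi.const_mul σ)
      (integrable_helper (by fun_prop) (C := 1) (fun z => by
        rw [one_mul]; nlinarith [sq_nonneg (|z| - 1), sq_abs z, abs_nonneg z])),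
      MeasureTheory.integral_const_mul, J0, J1]
    ring
  -- the integral of (σ+z) against the tilted density is -σ
  have hJσψ : ∫ z, (σ+z) * phi (z + 2*σ) = -σ := by
    rw [tilt (2*σ) (fun z => σ + z)]
    have e : (fun z => (σ + (-z - 2*σ)) * phi z) = fun z => -((σ+z) * phi z) := by
      ext z; ring
    rw [e, integral_neg, hJσ]
  -- tilt invariance of (σ+z) A φ
  have hMtilt : ∫ z, (σ+z) * A z * phi (z + 2*σ) = ∫ z, (σ+z) * A z * phi z := by
    rw [tilt (2*σ) (fun z => (σ+z) * A z)]
    congr 1; ext z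
    rw [hAneg z]
    ring
  -- M = σ
  have hM : ∫ z, (σ+z) * A z * phi z = σ := by
    have e : ∀ z, (σ+z) * A z * phi z + (σ+z) * A z * phi (z + 2*σ)
        = (σ+z) * phi z - (σ+z) * phi (z + 2*σ) := by
      intro z
      have := keyT z
      linear_combination (σ + z) * this
    have h1 : ∫ z, ((σ+z) * A z * phi z + (σ+z) * A z * phi (z + 2*σ))
        = ∫ z, ((σ+z) * phi z - (σ+z) * phi (z + 2*σ)) := by
      congr 1; ext z; exact e z
    rw [integral_add isAphi isApsi, integral_sub isphi ispsi, hJσ, hJσψ, hMtilt] at h1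
    linarith
  -- second moment
  have hS2 : ∫ z, (σ+z)^2 * phi z = σ^2 + 1 := by
    have e : (fun z => (σ+z)^2 * phi z)
        = fun z => (σ^2 * phi z + (2*σ) * (z * phi z)) + z^2 * phi z := by
      ext z; ring
    have i1 : Integrable (fun z => z * phi z) :=
      integrable_helper (by fun_prop) (C := 1) (fun z => by
        rw [one_mul]; nlinarith [sq_nonneg (|z| - 1), sq_abs z, abs_nonneg z])
    have i2 : Integrable (fun z => z^2 * phi z) :=
      integrable_helper (by fun_prop) (C := 1) (fun z => by
        rw [abs_of_nonneg (by positivity)]; nlinarith [sq_nonneg z])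
    have ia : Integrable (fun z => σ^2 * phi z + 2*σ * (z * phi z)) :=
      (integrable_phi.const_mul (σ^2)).add (i1.const_mul (2*σ))
    have ib : Integrable (fun z => σ^2 * phi z) := integrable_phi.const_mul (σ^2)
    have ic : Integrable (fun z => 2*σ * (z * phi z)) := i1.const_mul (2*σ)
    rw [e, integral_add ia i2, integral_add ib ic,
      MeasureTheory.integral_const_mul, MeasureTheory.integral_const_mul, J0, J1, J2]
    ring
  -- variational bound
  set t : ℝ := σ / (1 + σ^2) with ht
  have hq : 0 ≤ ∫ z, (A z - t*(σ+z))^2 * phi z :=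
    integral_nonneg (fun z => mul_nonneg (sq_nonneg _) (phi_nonneg z))
  have hexp : ∫ z, (A z - t*(σ+z))^2 * phi z
      = (∫ z, A z^2 * phi z) - 2*t*σ + t^2*(σ^2+1) := by
    have e : (fun z => (A z - t*(σ+z))^2 * phi z)
        = fun z => (A z^2 * phi z - (2*t) * ((σ+z) * A z * phi z))
            + t^2 * ((σ+z)^2 * phi z) := by
      ext z; ring
    have i3 : Integrable (fun z => 2*t * ((σ+z) * A z * phi z)) := isAphi.const_mul (2*t)
    have i4 : Integrable (fun z => A z^2 * phi z - 2*t * ((σ+z) * A z * phi z)) :=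
      iA2phi.sub i3
    have i5 : Integrable (fun z => t^2 * ((σ+z)^2 * phi z)) := is2phi.const_mul (t^2)
    rw [e, integral_add i4 i5, integral_sub iA2phi i3,
      MeasureTheory.integral_const_mul, MeasureTheory.integral_const_mul, hM, hS2]
  have hI2 : σ^2/(1+σ^2) ≤ ∫ z, A z^2 * phi z := by
    rw [hexp] at hq
    have hpos : (0:ℝ) < 1 + σ^2 := by positivity
    have ht2 : t = σ / (1+σ^2) := ht
    rw [ht2] at hq
    have h1 : 2 * (σ / (1+σ^2)) * σ = 2*σ^2/(1+σ^2) := by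
      field_simp
    have h2 : (σ / (1+σ^2))^2 * (σ^2+1) = σ^2/(1+σ^2) := by
      rw [div_pow]
      rw [div_mul_eq_mul_div, div_eq_div_iff (by positivity) (by positivity)]
      ring
    rw [h1, h2] at hq
    have : 2*σ^2/(1+σ^2) - σ^2/(1+σ^2) = σ^2/(1+σ^2) := by ring
    linarith
  -- convert the goal
  have hgoal : ∫ z, ((Real.cosh (σ ^ 2 + σ * z))⁻¹) ^ 2 ∂(gaussianReal 0 1)
      = 1 - ∫ z, A z^2 * phi z := by
    rw [gauss_int]
    have e : (fun z => ((Real.cosh (σ ^ 2 + σ * z))⁻¹) ^ 2 * phi z)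
        = fun z => phi z - A z^2 * phi z := by
      ext z
      have hc := Real.cosh_pos (σ^2 + σ*z)
      have hsq := Real.cosh_sq (σ^2 + σ*z)
      have htanh : A z = Real.sinh (σ^2 + σ*z) / Real.cosh (σ^2 + σ*z) :=
        Real.tanh_eq_sinh_div_cosh _
      have hs2 : Real.sinh (σ^2 + σ*z) ^2 = Real.cosh (σ^2 + σ*z)^2 - 1 := by
        nlinarith [hsq]
      have : ((Real.cosh (σ ^ 2 + σ * z))⁻¹) ^ 2 = 1 - A z^2 := by
        rw [htanh, div_pow, hs2]
        field_simp
        ring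
      rw [this]
      ring
    rw [e, integral_sub integrable_phi iA2phi, J0]
  rw [hgoal]
  have hpos : (0:ℝ) < 1 + σ^2 := by positivity
  have : 1 - σ^2/(1+σ^2) = 1/(1+σ^2) := by field_simp; ring
  linarith
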